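/- Let N = 2 or 3, ε > 0, 0 ≤ Ω < ∞, and x_ε ∈ ℝᴺ with |x_ε| bounded. For u ∈ H¹(ℝᴺ,ℂ) define ‖u‖_ε² = ∫_{ℝᴺ} [ |(∇ − iε² x^Ω)u|² + (1 + ε²(|εx + x_ε|² − 1)²) |u|² ] dx. Then there exists a constant C > 0, independent of ε small, such that ‖u‖²_{H¹(ℝᴺ)} ≤ C ‖u‖_ε² for all u with ‖u‖_ε < ∞. -/

import Mathlib

open MeasureTheory

/-- The rotational vector field `x^Ω`. -/
noncomputable def xOmega (N : ℕ) (Ω : ℝ) (x : EuclideanSpace ℝ (Fin N)) :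
    EuclideanSpace ℝ (Fin N) :=
  (WithLp.equiv 2 (Fin N → ℝ)).symm (fun j =>
    if (j : ℕ) = 0 then -(Ω / 2) * (if h : 1 < N then x ⟨1, h⟩ else 0)
    else if (j : ℕ) = 1 then (Ω / 2) * (if h : 0 < N then x ⟨0, h⟩ else 0)
    else 0)

/-- The squared magnetic norm
`‖u‖_ε² = ∫ |(∇ − iε²x^Ω)u|² + (1 + ε²(|εx + x_ε|² − 1)²)|u|²`. -/
noncomputable def normSqEps {N : ℕ} (Ω ε : ℝ) (xε : EuclideanSpace ℝ (Fin N))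
    (u : EuclideanSpace ℝ (Fin N) → ℂ) (x : EuclideanSpace ℝ (Fin N)) : ℝ :=
  (∑ j : Fin N, ‖fderiv ℝ u x (EuclideanSpace.single j 1)
      - Complex.I * ((ε ^ 2 * xOmega N Ω x j : ℝ) : ℂ) * u x‖ ^ 2)
    + (1 + ε ^ 2 * (‖ε • x + xε‖ ^ 2 - 1) ^ 2) * ‖u x‖ ^ 2

open Finset in
lemma opNorm_sq_le_sum {N : ℕ} (f : EuclideanSpace ℝ (Fin N) →L[ℝ] ℂ) :
    ‖f‖ ^ 2 ≤ ∑ j : Fin N, ‖f (EuclideanSpace.single j 1)‖ ^ 2 := by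
  set S := ∑ j : Fin N, ‖f (EuclideanSpace.single j 1)‖ ^ 2 with hSdef
  have hS : 0 ≤ S := by positivity
  have h : ‖f‖ ≤ Real.sqrt S := by
    apply f.opNorm_le_bound (Real.sqrt_nonneg _)
    intro x
    have hx : ∑ j : Fin N, x j • EuclideanSpace.single j 1 = x := by
      have := (EuclideanSpace.basisFun (Fin N) ℝ).sum_repr x
      simpa [EuclideanSpace.basisFun_apply, EuclideanSpace.basisFun_repr] using this
    have h1 : ‖f x‖ ≤ ∑ j : Fin N, |x j| * ‖f (EuclideanSpace.single j 1)‖ := by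
      calc ‖f x‖ = ‖f (∑ j : Fin N, x j • EuclideanSpace.single j 1)‖ := by rw [hx]
        _ = ‖∑ j : Fin N, x j • f (EuclideanSpace.single j 1)‖ := by
            rw [map_sum]; simp only [_root_.map_smul]
        _ ≤ ∑ j : Fin N, ‖x j • f (EuclideanSpace.single j 1)‖ := norm_sum_le _ _
        _ = ∑ j : Fin N, |x j| * ‖f (EuclideanSpace.single j 1)‖ := by
            simp [norm_smul, Real.norm_eq_abs]
    have h2 : (∑ j : Fin N, |x j| * ‖f (EuclideanSpace.single j 1)‖) ^ 2 ≤
        (∑ j : Fin N, (x j) ^ 2) * S := by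
      have := Finset.sum_mul_sq_le_sq_mul_sq Finset.univ (fun j => |x j|)
        (fun j => ‖f (EuclideanSpace.single j 1)‖)
      simpa [sq_abs] using this
    have hnx : ‖x‖ ^ 2 = ∑ j : Fin N, (x j) ^ 2 := by
      rw [EuclideanSpace.norm_eq, Real.sq_sqrt (by positivity)]
      simp [Real.norm_eq_abs, sq_abs]
    calc ‖f x‖ ≤ ∑ j : Fin N, |x j| * ‖f (EuclideanSpace.single j 1)‖ := h1
      _ ≤ Real.sqrt ((∑ j : Fin N, (x j) ^ 2) * S) := by
          rw [← Real.sqrt_sq (by positivity : (0:ℝ) ≤ ∑ j : Fin N, |x j| * ‖f (EuclideanSpace.single j 1)‖)]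
          exact Real.sqrt_le_sqrt h2
      _ = Real.sqrt S * ‖x‖ := by
          rw [← hnx, Real.sqrt_mul (by positivity), Real.sqrt_sq (norm_nonneg x), mul_comm]
  calc ‖f‖ ^ 2 ≤ Real.sqrt S ^ 2 := pow_le_pow_left₀ (norm_nonneg f) h 2
    _ = S := Real.sq_sqrt hS

lemma coord_sq_le_norm_sq {N : ℕ} (x : EuclideanSpace ℝ (Fin N)) (i : Fin N) :
    (x i) ^ 2 ≤ ‖x‖ ^ 2 := by
  have hnx : ‖x‖ ^ 2 = ∑ j : Fin N, (x j) ^ 2 := by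
    rw [EuclideanSpace.norm_eq, Real.sq_sqrt (by positivity)]
    simp [Real.norm_eq_abs, sq_abs]
  rw [hnx]
  exact Finset.single_le_sum (f := fun j => (x j) ^ 2) (fun j _ => sq_nonneg _)
    (Finset.mem_univ i)

lemma xOmega_sq_le {N : ℕ} (Ω : ℝ) (x : EuclideanSpace ℝ (Fin N)) (j : Fin N) :
    (xOmega N Ω x j) ^ 2 ≤ Ω ^ 2 / 4 * ‖x‖ ^ 2 := by
  have h : xOmega N Ω x j =
      if (j : ℕ) = 0 then -(Ω / 2) * (if h : 1 < N then x ⟨1, h⟩ else 0)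
      else if (j : ℕ) = 1 then (Ω / 2) * (if h : 0 < N then x ⟨0, h⟩ else 0)
      else 0 := by
    simp only [xOmega, WithLp.equiv_symm_apply, PiLp.toLp_apply]
  rw [h]
  split_ifs with h0 h1 h1' h2
  · nlinarith [coord_sq_le_norm_sq x ⟨1, h1⟩]
  · nlinarith [sq_nonneg Ω, sq_nonneg ‖x‖]
  · nlinarith [coord_sq_le_norm_sq x ⟨0, h2⟩]
  · nlinarith [sq_nonneg Ω, sq_nonneg ‖x‖]
  · nlinarith [sq_nonneg Ω, sq_nonneg ‖x‖]

lemma norm_sq_split (v w : ℂ) : ‖v‖ ^ 2 ≤ 2 * ‖v - w‖ ^ 2 + 2 * ‖w‖ ^ 2 := by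
  have h1 : ‖v‖ ≤ ‖v - w‖ + ‖w‖ := by
    calc ‖v‖ = ‖(v - w) + w‖ := by rw [sub_add_cancel]
      _ ≤ ‖v - w‖ + ‖w‖ := norm_add_le _ _
  nlinarith [norm_nonneg v, norm_nonneg (v - w), norm_nonneg w,
    sq_nonneg (‖v - w‖ - ‖w‖)]

lemma growth_aux (ε t X M : ℝ) (hε : 0 < ε) (hε1 : ε < 1) (hM : 0 ≤ M)
    (hX0 : 0 ≤ X) (ht0 : 0 ≤ t) (h1 : ε * X ≤ t + M) :
    ε ^ 4 * X ^ 2 ≤ 4 + 2 * M ^ 2 + 4 * (ε ^ 2 * (t ^ 2 - 1) ^ 2) := by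
  have hε2 : ε ^ 2 ≤ 1 := by nlinarith
  have h2 : ε ^ 2 * X ^ 2 ≤ (t + M) ^ 2 := by
    have := mul_self_le_mul_self (mul_nonneg hε.le hX0) h1
    nlinarith
  have hsq : t ^ 2 ≤ 2 + 2 * (t ^ 2 - 1) ^ 2 := by
    nlinarith [sq_nonneg (2 * t ^ 2 - 5/2)]
  have step1 : ε ^ 2 * (ε ^ 2 * X ^ 2) ≤ ε ^ 2 * (2 * t ^ 2 + 2 * M ^ 2) :=
    mul_le_mul_of_nonneg_left (by nlinarith [sq_nonneg (t - M)]) (sq_nonneg ε)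
  have step2 : ε ^ 2 * t ^ 2 ≤ 2 * ε ^ 2 + 2 * (ε ^ 2 * (t ^ 2 - 1) ^ 2) := by
    nlinarith [mul_le_mul_of_nonneg_left hsq (sq_nonneg ε)]
  have step3 : ε ^ 2 * M ^ 2 ≤ M ^ 2 := mul_le_of_le_one_left (sq_nonneg M) hε2
  nlinarith [step1, step2, step3, hε2]

lemma Kbound_aux (n Ω M s : ℝ) (hn : 0 ≤ n) (hs0 : 0 ≤ s) :
    n * (Ω ^ 2 / 4) * (4 + 2 * M ^ 2 + 4 * s) ≤ n * Ω ^ 2 * (4 + 2 * M ^ 2) * (1 + s) := by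
  nlinarith [mul_nonneg (mul_nonneg hn (sq_nonneg Ω)) hs0,
    mul_nonneg (mul_nonneg (mul_nonneg hn (sq_nonneg Ω)) (sq_nonneg M)) hs0,
    mul_nonneg hn (sq_nonneg Ω),
    mul_nonneg (mul_nonneg hn (sq_nonneg Ω)) (sq_nonneg M)]

lemma combine_aux (K s D U F SS A : ℝ) (hK0 : 0 ≤ K) (hs0 : 0 ≤ s) (hD0 : 0 ≤ D)
    (hu2 : 0 ≤ U) (hop : F ≤ SS) (hS : SS ≤ 2 * D + 2 * A * U)
    (hA : A ≤ K * (1 + s)) :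
    F + U ≤ (2 * K + 2) * (D + (1 + s) * U) := by
  have hAu : 2 * A * U ≤ 2 * (K * (1 + s)) * U :=
    mul_le_mul_of_nonneg_right (by linarith) hu2
  nlinarith [mul_nonneg hK0 hs0, mul_nonneg (mul_nonneg hK0 hs0) hu2,
    mul_nonneg hK0 hu2, mul_nonneg hs0 hu2, mul_nonneg hK0 hD0]

lemma pointwise_bound {N : ℕ} (Ω ε M : ℝ) (hε : 0 < ε) (hε1 : ε < 1)
    (xε : EuclideanSpace ℝ (Fin N)) (hxM : ‖xε‖ ≤ M)
    (u : EuclideanSpace ℝ (Fin N) → ℂ) (x : EuclideanSpace ℝ (Fin N)) :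
    ‖fderiv ℝ u x‖ ^ 2 + ‖u x‖ ^ 2 ≤
      (2 * ((N : ℝ) * Ω ^ 2 * (4 + 2 * M ^ 2)) + 2) * normSqEps Ω ε xε u x := by
  have hM : 0 ≤ M := le_trans (norm_nonneg _) hxM
  set K : ℝ := (N : ℝ) * Ω ^ 2 * (4 + 2 * M ^ 2) with hK
  set t : ℝ := ‖ε • x + xε‖ with ht
  set s : ℝ := ε ^ 2 * (t ^ 2 - 1) ^ 2 with hs
  set a : Fin N → ℝ := fun j => ε ^ 2 * xOmega N Ω x j with ha
  set D : ℝ := ∑ j : Fin N,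
      ‖fderiv ℝ u x (EuclideanSpace.single j 1)
        - Complex.I * ((a j : ℝ) : ℂ) * u x‖ ^ 2 with hD
  set F : ℝ := ‖fderiv ℝ u x‖ ^ 2 with hF
  set U : ℝ := ‖u x‖ ^ 2 with hU
  set X : ℝ := ‖x‖ with hX
  clear_value K t s a D F U X
  have hX0 : 0 ≤ X := by rw [hX]; positivity
  have hK0 : 0 ≤ K := by rw [hK]; positivity
  have hs0 : 0 ≤ s := by rw [hs]; positivity
  have ht0 : 0 ≤ t := by rw [ht]; positivity
  have hD0 : 0 ≤ D := by rw [hD]; exact Finset.sum_nonneg fun j _ => by positivity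
  have hu2 : 0 ≤ U := by rw [hU]; positivity
  have hnorm : normSqEps Ω ε xε u x = D + (1 + s) * U := by
    simp only [normSqEps, hD, hs, ht, hU, ha]
  have hasq : ∀ j : Fin N, (a j) ^ 2 ≤ ε ^ 4 * (Ω ^ 2 / 4 * X ^ 2) := by
    intro j
    have h2 : (a j) ^ 2 = ε ^ 4 * (xOmega N Ω x j) ^ 2 := by simp only [ha]; ring
    rw [h2, hX]
    exact mul_le_mul_of_nonneg_left (xOmega_sq_le Ω x j) (by positivity)
  have hgrow : ε ^ 4 * X ^ 2 ≤ 4 + 2 * M ^ 2 + 4 * s := by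
    have h1 : ε * X ≤ t + M := by
      calc ε * X = ‖ε • x‖ := by
            rw [hX, norm_smul, Real.norm_eq_abs, abs_of_pos hε]
        _ = ‖(ε • x + xε) - xε‖ := by rw [add_sub_cancel_right]
        _ ≤ ‖ε • x + xε‖ + ‖xε‖ := norm_sub_le _ _
        _ ≤ t + M := by rw [← ht]; exact add_le_add le_rfl hxM
    rw [hs]
    exact growth_aux ε t X M hε hε1 hM hX0 ht0 h1
  set A : ℝ := ∑ j : Fin N, (a j) ^ 2 with hA'
  have hA : A ≤ K * (1 + s) := by
    calc A ≤ ∑ _j : Fin N, ε ^ 4 * (Ω ^ 2 / 4 * X ^ 2) :=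
          Finset.sum_le_sum fun j _ => hasq j
      _ = (N : ℝ) * (Ω ^ 2 / 4) * (ε ^ 4 * X ^ 2) := by
          rw [Finset.sum_const]; simp [Finset.card_univ]; ring
      _ ≤ (N : ℝ) * (Ω ^ 2 / 4) * (4 + 2 * M ^ 2 + 4 * s) :=
          mul_le_mul_of_nonneg_left hgrow (by positivity)
      _ ≤ K * (1 + s) := by rw [hK]; exact Kbound_aux _ _ _ _ (Nat.cast_nonneg N) hs0
  have hj : ∀ j : Fin N, ‖fderiv ℝ u x (EuclideanSpace.single j 1)‖ ^ 2 ≤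
      2 * ‖fderiv ℝ u x (EuclideanSpace.single j 1)
          - Complex.I * ((a j : ℝ) : ℂ) * u x‖ ^ 2 + 2 * ((a j) ^ 2 * U) := by
    intro j
    have h0 := norm_sq_split (fderiv ℝ u x (EuclideanSpace.single j 1))
      (Complex.I * ((a j : ℝ) : ℂ) * u x)
    have hnw : ‖Complex.I * ((a j : ℝ) : ℂ) * u x‖ ^ 2 = (a j) ^ 2 * U := by
      rw [hU, norm_mul, norm_mul, Complex.norm_I, one_mul, Complex.norm_real,
        Real.norm_eq_abs, mul_pow, sq_abs]
    rw [hnw] at h0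
    exact h0
  have hS : (∑ j : Fin N, ‖fderiv ℝ u x (EuclideanSpace.single j 1)‖ ^ 2) ≤
      2 * D + 2 * A * U := by
    calc (∑ j : Fin N, ‖fderiv ℝ u x (EuclideanSpace.single j 1)‖ ^ 2)
        ≤ ∑ j : Fin N, (2 * ‖fderiv ℝ u x (EuclideanSpace.single j 1)
          - Complex.I * ((a j : ℝ) : ℂ) * u x‖ ^ 2 + 2 * ((a j) ^ 2 * U)) :=
          Finset.sum_le_sum fun j _ => hj j
      _ = 2 * D + 2 * A * U := by
          rw [Finset.sum_add_distrib, ← Finset.mul_sum, ← Finset.mul_sum, hD, hA']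
          congr 1
          rw [mul_assoc, Finset.sum_mul]
  have hop : F ≤ ∑ j : Fin N, ‖fderiv ℝ u x (EuclideanSpace.single j 1)‖ ^ 2 := by
    rw [hF]; exact opNorm_sq_le_sum _
  rw [hnorm]
  show F + U ≤ _
  exact combine_aux K s D U F _ A hK0 hs0 hD0 hu2 hop hS hA

/-- For `N = 2, 3`, fixed `0 ≤ Ω < ∞` and `x_ε` bounded, there exists a constant
`C > 0`, independent of small `ε > 0`, such that `‖u‖²_{H¹} ≤ C ‖u‖_ε²` for all `u`
with `‖u‖_ε < ∞`. -/
theorem H1_le_eps_norm {N : ℕ} (hN : N = 2 ∨ N = 3) (Ω : ℝ) (hΩ : 0 ≤ Ω)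
    (xε : ℝ → EuclideanSpace ℝ (Fin N)) (M : ℝ) (hxε : ∀ ε, ‖xε ε‖ ≤ M) :
    ∃ ε₀ > 0, ∃ C > 0, ∀ ε : ℝ, 0 < ε → ε < ε₀ →
      ∀ u : EuclideanSpace ℝ (Fin N) → ℂ, Differentiable ℝ u →
        Integrable (normSqEps Ω ε (xε ε) u) volume →
        (∫ x, (‖fderiv ℝ u x‖ ^ 2 + ‖u x‖ ^ 2)) ≤ C * ∫ x, normSqEps Ω ε (xε ε) u x := by
  have hM : 0 ≤ M := le_trans (norm_nonneg _) (hxε 0)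
  refine ⟨1, one_pos, 2 * ((N : ℝ) * Ω ^ 2 * (4 + 2 * M ^ 2)) + 2, by positivity, ?_⟩
  intro ε hε hε1 u hu hint
  set C : ℝ := 2 * ((N : ℝ) * Ω ^ 2 * (4 + 2 * M ^ 2)) + 2 with hC
  have hpt : ∀ x, ‖fderiv ℝ u x‖ ^ 2 + ‖u x‖ ^ 2 ≤ C * normSqEps Ω ε (xε ε) u x :=
    fun x => pointwise_bound Ω ε M hε hε1 (xε ε) (hxε ε) u x
  have hmeas : AEStronglyMeasurable (fun x => ‖fderiv ℝ u x‖ ^ 2 + ‖u x‖ ^ 2)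
      (volume : Measure (EuclideanSpace ℝ (Fin N))) := by
    apply Measurable.aestronglyMeasurable
    exact ((measurable_fderiv ℝ u).norm.pow_const 2).add
      (hu.continuous.measurable.norm.pow_const 2)
  have hCg : Integrable (fun x => C * normSqEps Ω ε (xε ε) u x) volume :=
    hint.const_mul C
  have hf : Integrable (fun x => ‖fderiv ℝ u x‖ ^ 2 + ‖u x‖ ^ 2) volume := by
    refine hCg.mono' hmeas (ae_of_all _ fun x => ?_)
    rw [Real.norm_of_nonneg (by positivity)]
    exact hpt x
  calc (∫ x, (‖fderiv ℝ u x‖ ^ 2 + ‖u x‖ ^ 2)) ≤ ∫ x, C * normSqEps Ω ε (xε ε) u x :=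
      integral_mono hf hCg hpt
    _ = C * ∫ x, normSqEps Ω ε (xε ε) u x := MeasureTheory.integral_const_mul C _
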